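/- arXiv:1903.07908 — 5 statements merged into one kernel-verified Lean document; each statement's English description precedes it below -/
import Mathlib

section
/- For every r with 1/4 ≤ r ≤ 0.495, we have π·r² ≥ 0.56127 · arcsin(r/(1 − r)). Equivalently, the function f(r) = π·r² / arcsin(r/(1 − r)) restricted to [1/4, 0.495] attains its global minimum at r = 0.495, where its value is at least 0.56127. -/
open Real

lemma arcsin_le_via_cos (x T : ℝ) (hx1 : -1 ≤ x) (hx2 : x ≤ 1) (hT0 : 0 ≤ T)
    (hT : T ≤ 1.5707963)
    (key : x ≤ 1 - 2 * ((1.5707963268 - T)/2 - ((1.5707963268 - T)/2)^3/6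
        + ((1.5707963268 - T)/2)^4 * (5/96))^2) :
    arcsin x ≤ T := by
  have hpi1 : (3.14159265358979323846 : ℝ) < π := pi_gt_d20
  have hpi2 : π < 3.14159265358979323847 := pi_lt_d20
  have hTpi : T ≤ π/2 := by linarith
  rw [Real.arcsin_le_iff_le_sin ⟨hx1, hx2⟩ ⟨by linarith, hTpi⟩]
  set v : ℝ := (1.5707963268 - T)/2 with hv
  have hv0 : (0:ℝ) ≤ v := by rw [hv]; norm_num; linarith
  have hv1 : v ≤ 1 := by rw [hv]; norm_num; linarith
  have hsb := Real.sin_bound (x := v) (by rw [abs_of_nonneg hv0]; exact hv1)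
  rw [abs_of_nonneg hv0] at hsb
  have hsinv : sin v ≤ v - v^3/6 + v^4 * (5/96) := by
    have := le_of_abs_le hsb
    norm_num at this ⊢
    nlinarith [mul_le_mul_of_nonneg_left hv1 (pow_nonneg hv0 4), pow_nonneg hv0 4]
  have hsinv0 : 0 ≤ sin v := Real.sin_nonneg_of_nonneg_of_le_pi hv0 (by linarith)
  have hsq : sin v ^ 2 ≤ (v - v^3/6 + v^4 * (5/96))^2 :=
    pow_le_pow_left₀ hsinv0 hsinv 2
  have hcos2v : cos (2*v) = 1 - 2 * sin v ^ 2 := by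
    have h1 := Real.cos_two_mul' v
    have h2 := Real.sin_sq_add_cos_sq v
    linarith
  have h2v : π/2 - T ≤ 2*v := by rw [hv]; linarith
  have hmono : cos (2*v) ≤ cos (π/2 - T) :=
    Real.cos_le_cos_of_nonneg_of_le_pi (by linarith) (by rw [hv]; linarith) h2v
  rw [Real.cos_pi_div_two_sub] at hmono
  calc x ≤ 1 - 2 * (v - v^3/6 + v^4 * (5/96))^2 := key
    _ ≤ 1 - 2 * sin v ^ 2 := by linarith
    _ = cos (2*v) := hcos2v.symm
    _ ≤ sin T := hmono

lemma arcsin_le_direct (x T : ℝ) (hx1 : -1 ≤ x) (hx2 : x ≤ 1) (hT0 : 0 ≤ T)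
    (hT1 : T ≤ 1) (key : x ≤ T - T^3/6 - T^4 * (5/96)) :
    arcsin x ≤ T := by
  have hpi : (3:ℝ) < π := pi_gt_three
  rw [Real.arcsin_le_iff_le_sin ⟨hx1, hx2⟩ ⟨by linarith, by linarith⟩]
  have hsb := Real.sin_bound (x := T) (by rw [abs_of_nonneg hT0]; exact hT1)
  rw [abs_of_nonneg hT0] at hsb
  have := neg_le_of_abs_le hsb
  norm_num at this ⊢
  nlinarith [mul_le_mul_of_nonneg_left hT1 (pow_nonneg hT0 4), pow_nonneg hT0 4]

lemma cone_step (r a b T : ℝ) (har : a ≤ r) (hrb : r ≤ b) (hb : b ≤ 0.495)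
    (ha0 : 0 < a) (hT : arcsin (b/(1-b)) ≤ T)
    (hfin : 0.56127 * T ≤ 3.14159265358979323846 * a^2) :
    π * r ^ 2 ≥ 0.56127 * arcsin (r / (1 - r)) := by
  have hpi1 : (3.14159265358979323846 : ℝ) < π := pi_gt_d20
  have hb1 : (0:ℝ) < 1 - b := by linarith
  have hr1 : (0:ℝ) < 1 - r := by linarith
  have hx : r/(1-r) ≤ b/(1-b) := by
    rw [div_le_div_iff₀ hr1 hb1]; nlinarith
  have hmono := Real.monotone_arcsin hx
  have hsq : a^2 ≤ r^2 := pow_le_pow_left₀ ha0.le har 2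
  nlinarith [sq_nonneg a, sq_nonneg r]

/-- Density of cones, first part: for `1/4 ≤ r ≤ 0.495`,
the disk area `π·r²` is at least `0.56127` times the cone area
`arcsin (r / (1 - r))`. -/
theorem cone_density_large (r : ℝ) (h₁ : 1/4 ≤ r) (h₂ : r ≤ 0.495) :
    π * r ^ 2 ≥ 0.56127 * arcsin (r / (1 - r)) := by
  rcases le_or_gt r ((1271015107:ℝ)/5000000000) with hr | hsp
  · exact cone_step r ((1:ℝ)/4) ((1271015107:ℝ)/5000000000) ((3486828163:ℝ)/10000000000) h₁ hr (by norm_num) (by norm_num)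
        (arcsin_le_direct (((1271015107:ℝ)/5000000000)/(1-((1271015107:ℝ)/5000000000))) ((3486828163:ℝ)/10000000000) (by norm_num) (by norm_num) (by norm_num) (by norm_num) (by norm_num)) (by norm_num)
  rcases le_or_gt r ((1304276069:ℝ)/5000000000) with hr | hsp
  · exact cone_step r ((1271015107:ℝ)/5000000000) ((1304276069:ℝ)/5000000000) ((1808462313:ℝ)/5000000000) (le_of_lt hsp) hr (by norm_num) (by norm_num)
        (arcsin_le_direct (((1304276069:ℝ)/5000000000)/(1-((1304276069:ℝ)/5000000000))) ((1808462313:ℝ)/5000000000) (by norm_num) (by norm_num) (by norm_num) (by norm_num) (by norm_num)) (by norm_num)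
  rcases le_or_gt r ((270374417:ℝ)/1000000000) with hr | hsp
  · exact cone_step r ((1304276069:ℝ)/5000000000) ((270374417:ℝ)/1000000000) ((3808702799:ℝ)/10000000000) (le_of_lt hsp) hr (by norm_num) (by norm_num)
        (arcsin_le_direct (((270374417:ℝ)/1000000000)/(1-((270374417:ℝ)/1000000000))) ((3808702799:ℝ)/10000000000) (by norm_num) (by norm_num) (by norm_num) (by norm_num) (by norm_num)) (by norm_num)
  rcases le_or_gt r ((567640543:ℝ)/2000000000) with hr | hsp
  · exact cone_step r ((270374417:ℝ)/1000000000) ((567640543:ℝ)/2000000000) ((1022937837:ℝ)/2500000000) (le_of_lt hsp) hr (by norm_num) (by norm_num)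
        (arcsin_le_direct (((567640543:ℝ)/2000000000)/(1-((567640543:ℝ)/2000000000))) ((1022937837:ℝ)/2500000000) (by norm_num) (by norm_num) (by norm_num) (by norm_num) (by norm_num)) (by norm_num)
  rcases le_or_gt r ((3023844481:ℝ)/10000000000) with hr | hsp
  · exact cone_step r ((567640543:ℝ)/2000000000) ((3023844481:ℝ)/10000000000) ((2254420209:ℝ)/5000000000) (le_of_lt hsp) hr (by norm_num) (by norm_num)
        (arcsin_le_direct (((3023844481:ℝ)/10000000000)/(1-((3023844481:ℝ)/10000000000))) ((2254420209:ℝ)/5000000000) (by norm_num) (by norm_num) (by norm_num) (by norm_num) (by norm_num)) (by norm_num)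
  rcases le_or_gt r ((163499009:ℝ)/500000000) with hr | hsp
  · exact cone_step r ((3023844481:ℝ)/10000000000) ((163499009:ℝ)/500000000) ((2558980339:ℝ)/5000000000) (le_of_lt hsp) hr (by norm_num) (by norm_num)
        (arcsin_le_direct (((163499009:ℝ)/500000000)/(1-((163499009:ℝ)/500000000))) ((2558980339:ℝ)/5000000000) (by norm_num) (by norm_num) (by norm_num) (by norm_num) (by norm_num)) (by norm_num)
  rcases le_or_gt r ((3583070881:ℝ)/10000000000) with hr | hsp
  · exact cone_step r ((163499009:ℝ)/500000000) ((3583070881:ℝ)/10000000000) ((1496264223:ℝ)/2500000000) (le_of_lt hsp) hr (by norm_num) (by norm_num)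
        (arcsin_le_via_cos (((3583070881:ℝ)/10000000000)/(1-((3583070881:ℝ)/10000000000))) ((1496264223:ℝ)/2500000000) (by norm_num) (by norm_num) (by norm_num) (by norm_num) (by norm_num)) (by norm_num)
  rcases le_or_gt r ((3960195217:ℝ)/10000000000) with hr | hsp
  · exact cone_step r ((3583070881:ℝ)/10000000000) ((3960195217:ℝ)/10000000000) ((3593013473:ℝ)/5000000000) (le_of_lt hsp) hr (by norm_num) (by norm_num)
        (arcsin_le_via_cos (((3960195217:ℝ)/10000000000)/(1-((3960195217:ℝ)/10000000000))) ((3593013473:ℝ)/5000000000) (by norm_num) (by norm_num) (by norm_num) (by norm_num) (by norm_num)) (by norm_num)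
  rcases le_or_gt r ((4345142739:ℝ)/10000000000) with hr | hsp
  · exact cone_step r ((3960195217:ℝ)/10000000000) ((4345142739:ℝ)/10000000000) ((219457911:ℝ)/250000000) (le_of_lt hsp) hr (by norm_num) (by norm_num)
        (arcsin_le_via_cos (((4345142739:ℝ)/10000000000)/(1-((4345142739:ℝ)/10000000000))) ((219457911:ℝ)/250000000) (by norm_num) (by norm_num) (by norm_num) (by norm_num) (by norm_num)) (by norm_num)
  rcases le_or_gt r ((4653998791:ℝ)/10000000000) with hr | hsp
  · exact cone_step r ((4345142739:ℝ)/10000000000) ((4653998791:ℝ)/10000000000) ((10567837773:ℝ)/10000000000) (le_of_lt hsp) hr (by norm_num) (by norm_num)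
        (arcsin_le_via_cos (((4653998791:ℝ)/10000000000)/(1-((4653998791:ℝ)/10000000000))) ((10567837773:ℝ)/10000000000) (by norm_num) (by norm_num) (by norm_num) (by norm_num) (by norm_num)) (by norm_num)
  rcases le_or_gt r ((4835799857:ℝ)/10000000000) with hr | hsp
  · exact cone_step r ((4653998791:ℝ)/10000000000) ((4835799857:ℝ)/10000000000) ((2424714281:ℝ)/2000000000) (le_of_lt hsp) hr (by norm_num) (by norm_num)
        (arcsin_le_via_cos (((4835799857:ℝ)/10000000000)/(1-((4835799857:ℝ)/10000000000))) ((2424714281:ℝ)/2000000000) (by norm_num) (by norm_num) (by norm_num) (by norm_num) (by norm_num)) (by norm_num)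
  rcases le_or_gt r ((4913269493:ℝ)/10000000000) with hr | hsp
  · exact cone_step r ((4835799857:ℝ)/10000000000) ((4913269493:ℝ)/10000000000) ((13089247469:ℝ)/10000000000) (le_of_lt hsp) hr (by norm_num) (by norm_num)
        (arcsin_le_via_cos (((4913269493:ℝ)/10000000000)/(1-((4913269493:ℝ)/10000000000))) ((13089247469:ℝ)/10000000000) (by norm_num) (by norm_num) (by norm_num) (by norm_num) (by norm_num)) (by norm_num)
  rcases le_or_gt r ((4939224943:ℝ)/10000000000) with hr | hsp
  · exact cone_step r ((4913269493:ℝ)/10000000000) ((4939224943:ℝ)/10000000000) ((13511986863:ℝ)/10000000000) (le_of_lt hsp) hr (by norm_num) (by norm_num)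
        (arcsin_le_via_cos (((4939224943:ℝ)/10000000000)/(1-((4939224943:ℝ)/10000000000))) ((13511986863:ℝ)/10000000000) (by norm_num) (by norm_num) (by norm_num) (by norm_num) (by norm_num)) (by norm_num)
  rcases le_or_gt r ((4946944993:ℝ)/10000000000) with hr | hsp
  · exact cone_step r ((4939224943:ℝ)/10000000000) ((4946944993:ℝ)/10000000000) ((13655124153:ℝ)/10000000000) (le_of_lt hsp) hr (by norm_num) (by norm_num)
        (arcsin_le_via_cos (((4946944993:ℝ)/10000000000)/(1-((4946944993:ℝ)/10000000000))) ((13655124153:ℝ)/10000000000) (by norm_num) (by norm_num) (by norm_num) (by norm_num) (by norm_num)) (by norm_num)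
  rcases le_or_gt r ((4949145297:ℝ)/10000000000) with hr | hsp
  · exact cone_step r ((4946944993:ℝ)/10000000000) ((4949145297:ℝ)/10000000000) ((684892183:ℝ)/500000000) (le_of_lt hsp) hr (by norm_num) (by norm_num)
        (arcsin_le_via_cos (((4949145297:ℝ)/10000000000)/(1-((4949145297:ℝ)/10000000000))) ((684892183:ℝ)/500000000) (by norm_num) (by norm_num) (by norm_num) (by norm_num) (by norm_num)) (by norm_num)
  rcases le_or_gt r ((2474882159:ℝ)/5000000000) with hr | hsp
  · exact cone_step r ((4949145297:ℝ)/10000000000) ((2474882159:ℝ)/5000000000) ((6855015717:ℝ)/5000000000) (le_of_lt hsp) hr (by norm_num) (by norm_num)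
        (arcsin_le_via_cos (((2474882159:ℝ)/5000000000)/(1-((2474882159:ℝ)/5000000000))) ((6855015717:ℝ)/5000000000) (by norm_num) (by norm_num) (by norm_num) (by norm_num) (by norm_num)) (by norm_num)
  rcases le_or_gt r ((2474968911:ℝ)/5000000000) with hr | hsp
  · exact cone_step r ((2474882159:ℝ)/5000000000) ((2474968911:ℝ)/5000000000) ((10970769:ℝ)/8000000) (le_of_lt hsp) hr (by norm_num) (by norm_num)
        (arcsin_le_via_cos (((2474968911:ℝ)/5000000000)/(1-((2474968911:ℝ)/5000000000))) ((10970769:ℝ)/8000000) (by norm_num) (by norm_num) (by norm_num) (by norm_num) (by norm_num)) (by norm_num)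
  rcases le_or_gt r ((2474993201:ℝ)/5000000000) with hr | hsp
  · exact cone_step r ((2474968911:ℝ)/5000000000) ((2474993201:ℝ)/5000000000) ((13714422663:ℝ)/10000000000) (le_of_lt hsp) hr (by norm_num) (by norm_num)
        (arcsin_le_via_cos (((2474993201:ℝ)/5000000000)/(1-((2474993201:ℝ)/5000000000))) ((13714422663:ℝ)/10000000000) (by norm_num) (by norm_num) (by norm_num) (by norm_num) (by norm_num)) (by norm_num)
  exact cone_step r ((2474993201:ℝ)/5000000000) ((99:ℝ)/200) ((13714691857:ℝ)/10000000000) (le_of_lt hsp) (by norm_num at h₂ ⊢; linarith) (by norm_num) (by norm_num)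
      (arcsin_le_via_cos (((99:ℝ)/200)/(1-((99:ℝ)/200))) ((13714691857:ℝ)/10000000000) (by norm_num) (by norm_num) (by norm_num) (by norm_num) (by norm_num)) (by norm_num)
end

section
/- For every r with 0.2019 ≤ r ≤ 1/2, we have π·r² ≥ (1/2) · arcsin(r/(1 − r)). Equivalently, the function f(r) = π·r² / arcsin(r/(1 − r)) restricted to [0.2019, 1/2] attains its global minimum 1/2 at r = 1/2. -/
set_option maxHeartbeats 1000000

open Real

/-- Rational polynomial core of the low-range estimate. -/
private lemma poly_low (r : ℝ) (h₁ : 0.2019 ≤ r) (h₂ : r ≤ 0.35) :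
    r ≤ (1 - r) * (6.283184 * r^2 - 41.3418 * r^6 - 81.1743 * r^8) := by
  have hr : (0:ℝ) ≤ r := by linarith
  rcases le_or_gt r 0.28 with h | h
  · have ha : (0:ℝ) ≤ r - 0.2019 := by linarith
    have hb : (0:ℝ) ≤ 0.28 - r := by linarith
    have h6 : r^6 ≤ 0.2019^6 + (0.28^6 - 0.2019^6)/(0.28 - 0.2019) * (r - 0.2019) := by
      nlinarith [mul_nonneg (mul_nonneg ha hb) (pow_nonneg hr 2),
        mul_nonneg (mul_nonneg ha hb) (pow_nonneg hr 4),
        mul_nonneg (mul_nonneg ha hb) (pow_nonneg hr 3),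
        mul_nonneg (mul_nonneg ha hb) (pow_nonneg hr 1),
        mul_nonneg ha hb]
    have h8 : r^8 ≤ 0.2019^8 + (0.28^8 - 0.2019^8)/(0.28 - 0.2019) * (r - 0.2019) := by
      nlinarith [mul_nonneg (mul_nonneg ha hb) (pow_nonneg hr 2),
        mul_nonneg (mul_nonneg ha hb) (pow_nonneg hr 4),
        mul_nonneg (mul_nonneg ha hb) (pow_nonneg hr 6),
        mul_nonneg (mul_nonneg ha hb) (pow_nonneg hr 5),
        mul_nonneg (mul_nonneg ha hb) (pow_nonneg hr 3),
        mul_nonneg (mul_nonneg ha hb) (pow_nonneg hr 1),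
        mul_nonneg ha hb]
    nlinarith [h6, h8, mul_nonneg ha hb, mul_nonneg (mul_nonneg ha hb) hr, sq_nonneg r,
      mul_nonneg (mul_nonneg ha ha) hb, mul_nonneg (mul_nonneg ha hb) hb]
  · have ha : (0:ℝ) ≤ r - 0.28 := by linarith
    have hb : (0:ℝ) ≤ 0.35 - r := by linarith
    have h6 : r^6 ≤ 0.28^6 + (0.35^6 - 0.28^6)/(0.35 - 0.28) * (r - 0.28) := by
      nlinarith [mul_nonneg (mul_nonneg ha hb) (pow_nonneg hr 2),
        mul_nonneg (mul_nonneg ha hb) (pow_nonneg hr 4),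
        mul_nonneg (mul_nonneg ha hb) (pow_nonneg hr 3),
        mul_nonneg (mul_nonneg ha hb) (pow_nonneg hr 1),
        mul_nonneg ha hb]
    have h8 : r^8 ≤ 0.28^8 + (0.35^8 - 0.28^8)/(0.35 - 0.28) * (r - 0.28) := by
      nlinarith [mul_nonneg (mul_nonneg ha hb) (pow_nonneg hr 2),
        mul_nonneg (mul_nonneg ha hb) (pow_nonneg hr 4),
        mul_nonneg (mul_nonneg ha hb) (pow_nonneg hr 6),
        mul_nonneg (mul_nonneg ha hb) (pow_nonneg hr 5),
        mul_nonneg (mul_nonneg ha hb) (pow_nonneg hr 3),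
        mul_nonneg (mul_nonneg ha hb) (pow_nonneg hr 1),
        mul_nonneg ha hb]
    nlinarith [h6, h8, mul_nonneg ha hb, mul_nonneg (mul_nonneg ha hb) hr, sq_nonneg r,
      mul_nonneg (mul_nonneg ha ha) hb, mul_nonneg (mul_nonneg ha hb) hb]

/-- Low range: for `0.2019 ≤ r ≤ 0.35`, `arcsin (r/(1-r)) ≤ 2πr²`. -/
private lemma cone_low (r : ℝ) (h₁ : 0.2019 ≤ r) (h₂ : r ≤ 0.35) :
    arcsin (r / (1 - r)) ≤ 2 * π * r ^ 2 := by
  have hπ₁ : (3.141592 : ℝ) ≤ π := pi_gt_d6.le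
  have hπ₂ : π ≤ 3.141593 := pi_lt_d6.le
  have h1r : (0.65 : ℝ) ≤ 1 - r := by linarith
  set x := r / (1 - r) with hxdef
  have hx0 : 0 ≤ x := div_nonneg (by linarith) (by linarith)
  have hx1 : x ≤ 1 := by
    rw [hxdef, div_le_one (by linarith)]; linarith
  set y := 2 * π * r ^ 2 with hydef
  have hy0 : 0 ≤ y := by positivity
  have hy1 : y ≤ 0.7698 := by nlinarith
  have hyabs : |y| ≤ 1 := by rw [abs_of_nonneg hy0]; linarith
  have hsb := Real.sin_bound hyabs
  rw [abs_of_nonneg hy0] at hsb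
  have hsin : y - y ^ 3 / 6 - y ^ 4 * (5 / 96) ≤ Real.sin y := by
    have := (abs_le.mp hsb).1
    nlinarith [pow_nonneg hy0 4, hy1]
  -- bounds on powers of y in terms of rational multiples of powers of r
  have hr0 : (0:ℝ) ≤ r := by linarith
  have hyA : 6.283184 * r ^ 2 ≤ y := by rw [hydef]; nlinarith
  have hyB : y ^ 3 ≤ 248.0508 * r ^ 6 := by
    rw [hydef]
    have hp3 : π ^ 3 ≤ 3.141593 ^ 3 :=
      pow_le_pow_left₀ (by positivity) hπ₂ 3
    nlinarith [pow_nonneg hr0 6, pow_pos pi_pos 3]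
  have hyC : y ^ 4 ≤ 1558.5463 * r ^ 8 := by
    rw [hydef]
    have hp4 : π ^ 4 ≤ 3.141593 ^ 4 :=
      pow_le_pow_left₀ (by positivity) hπ₂ 4
    nlinarith [pow_nonneg hr0 8, pow_pos pi_pos 4]
  have hxy : x ≤ y - y ^ 3 / 6 - y ^ 4 * (5 / 96) := by
    rw [hxdef, div_le_iff₀ (by linarith)]
    have hpoly := poly_low r h₁ h₂
    have h1r' : (0:ℝ) ≤ 1 - r := by linarith
    have e1 := mul_le_mul_of_nonneg_right hyA h1r'
    have e2 := mul_le_mul_of_nonneg_right hyB h1r'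
    have e3 := mul_le_mul_of_nonneg_right hyC h1r'
    have e4 : (0:ℝ) ≤ r ^ 8 * (1 - r) := mul_nonneg (pow_nonneg hr0 8) h1r'
    have e5 : (0:ℝ) ≤ r ^ 6 * (1 - r) := mul_nonneg (pow_nonneg hr0 6) h1r'
    linarith [e1, e2, e3, e4, e5, hpoly]
  have hxs : x ≤ Real.sin y := le_trans hxy hsin
  have hmem : x ∈ Set.Icc (-1 : ℝ) 1 := ⟨by linarith, hx1⟩
  have hymem : y ∈ Set.Icc (-(π/2)) (π/2) := by
    constructor <;> nlinarith
  exact (Real.arcsin_le_iff_le_sin hmem hymem).2 hxs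

/-- High range: for `0.35 ≤ r ≤ 1/2`. -/
private lemma cone_high (r : ℝ) (h₁ : 0.35 ≤ r) (h₂ : r ≤ 1/2) :
    π * r ^ 2 ≥ 1 / 2 * arcsin (r / (1 - r)) := by
  have hπ₁ : (3.141592 : ℝ) ≤ π := pi_gt_d6.le
  have hπ₂ : π ≤ 3.141593 := pi_lt_d6.le
  have h1r : (0.5 : ℝ) ≤ 1 - r := by linarith
  set x := r / (1 - r) with hxdef
  have hx0 : 0 ≤ x := div_nonneg (by linarith) (by linarith)
  have hx1 : x ≤ 1 := by
    rw [hxdef, div_le_one (by linarith)]; linarith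
  set a := Real.arccos x with hadef
  have ha0 : 0 ≤ a := Real.arccos_nonneg x
  have hcos : Real.cos a = x := Real.cos_arccos (by linarith) hx1
  have hq : 1 - a ^ 2 / 2 ≤ x := by
    rw [← hcos]; exact Real.one_sub_sq_div_two_le_cos
  have hsq : Real.sqrt (2 * (1 - x)) ≤ a := by
    rw [show a = Real.sqrt (a ^ 2) by rw [Real.sqrt_sq ha0]]
    exact Real.sqrt_le_sqrt (by linarith)
  have h1mx : 2 * (1 - x) = (2 * (1 - 2*r)) / (1 - r) := by
    rw [hxdef]; field_simp; ring
  have hkey : π * (1 - 2*r) * (1/2 + r) ≤ Real.sqrt (2 * (1 - x)) := by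
    rw [Real.le_sqrt (mul_nonneg (mul_nonneg pi_pos.le (by linarith)) (by linarith)) (by linarith)]
    rw [h1mx, le_div_iff₀ (by linarith)]
    have hp2 : π ^ 2 ≤ 9.8701 := by nlinarith
    have ht : (0:ℝ) ≤ 1 - 2*r := by linarith
    have hf0 : (0:ℝ) ≤ (1 - 2*r) * ((1/2 + r)^2 * (1 - r)) :=
      mul_nonneg ht (mul_nonneg (sq_nonneg _) (by linarith))
    have hA : (1 - 2*r) * ((1/2 + r)^2 * (1 - r)) ≤ 0.2 := by
      nlinarith [mul_nonneg (sub_nonneg.2 h₁) (by linarith : (0:ℝ) ≤ 1/2 - r),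
        sq_nonneg (r - 0.35), sq_nonneg (r - 1/2), sq_nonneg r]
    have hB : π^2 * ((1 - 2*r) * ((1/2 + r)^2 * (1 - r))) ≤ 2 := by
      nlinarith [hf0, hp2, hA, pow_pos pi_pos 2]
    have hC := mul_le_mul_of_nonneg_left hB ht
    nlinarith [hC]
  have harcsin : arcsin x = π / 2 - a := by
    rw [hadef, Real.arcsin_eq_pi_div_two_sub_arccos]
  rw [harcsin]
  nlinarith [le_trans hkey hsq]

/-- Density of cones, second part: for `0.2019 ≤ r ≤ 1/2`,
the disk area `π·r²` is at least `1/2` times the cone area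
`arcsin (r / (1 - r))`. -/
theorem cone_density_half (r : ℝ) (h₁ : 0.2019 ≤ r) (h₂ : r ≤ 1/2) :
    π * r ^ 2 ≥ 1 / 2 * arcsin (r / (1 - r)) := by
  rcases le_or_gt r 0.35 with h | h
  · have := cone_low r h₁ h
    linarith
  · exact cone_high r h.le h₂
end

section
/- For every x with 0 < x ≤ 1/3, we have π·x / (4·arcsin x) ≥ π / (12·arcsin(1/3)), and moreover π / (12·arcsin(1/3)) ≥ 0.77036. -/
open Real

private lemma nonneg_of_deriv (f f' : ℝ → ℝ) (hf : ∀ t, HasDerivAt f (f' t) t)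
    (h0 : f 0 = 0) (hd : ∀ t, 0 ≤ t → 0 ≤ f' t) : ∀ x, 0 ≤ x → 0 ≤ f x := by
  intro x hx
  have mono : MonotoneOn f (Set.Ici 0) := by
    apply monotoneOn_of_deriv_nonneg (convex_Ici 0)
      (fun t _ => (hf t).continuousAt.continuousWithinAt)
      (fun t ht => (hf t).differentiableAt.differentiableWithinAt)
    intro t ht
    rw [(hf t).deriv]
    exact hd t (le_of_lt (by simpa using ht))
  have := mono Set.self_mem_Ici (Set.mem_Ici.2 hx) hx
  linarith

private lemma sin_ge_cubic : ∀ x : ℝ, 0 ≤ x → x - x ^ 3 / 6 ≤ sin x := by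
  have := nonneg_of_deriv (fun t => sin t - (t - t ^ 3 / 6))
    (fun t => cos t - (1 - t ^ 2 / 2))
    (fun t => by
      have h1 : HasDerivAt (fun t : ℝ => t - t ^ 3 / 6) (1 - t ^ 2 / 2) t := by
        have := (hasDerivAt_id t).sub ((hasDerivAt_pow 3 t).div_const 6)
        refine this.congr_deriv ?_; push_cast; ring
      exact (Real.hasDerivAt_sin t).sub h1)
    (by norm_num)
    (fun t _ => by have := Real.one_sub_sq_div_two_le_cos (x := t); linarith)
  intro x hx; have := this x hx; simpa using this

private lemma cos_le_quartic : ∀ x : ℝ, 0 ≤ x → cos x ≤ 1 - x ^ 2 / 2 + x ^ 4 / 24 := by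
  have := nonneg_of_deriv (fun t => 1 - t ^ 2 / 2 + t ^ 4 / 24 - cos t)
    (fun t => sin t - (t - t ^ 3 / 6))
    (fun t => by
      have h1 : HasDerivAt (fun t : ℝ => 1 - t ^ 2 / 2 + t ^ 4 / 24)
          (-(t) + t ^ 3 / 6) t := by
        have := (((hasDerivAt_const t (1:ℝ)).sub ((hasDerivAt_pow 2 t).div_const 2)).add
          ((hasDerivAt_pow 4 t).div_const 24))
        refine this.congr_deriv ?_; push_cast; ring
      have := h1.sub (Real.hasDerivAt_cos t)
      refine this.congr_deriv ?_; ring)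
    (by norm_num)
    (fun t ht => by have := sin_ge_cubic t ht; linarith)
  intro x hx; have := this x hx; simpa using this

private lemma sin_le_quintic : ∀ x : ℝ, 0 ≤ x → sin x ≤ x - x ^ 3 / 6 + x ^ 5 / 120 := by
  have := nonneg_of_deriv (fun t => t - t ^ 3 / 6 + t ^ 5 / 120 - sin t)
    (fun t => 1 - t ^ 2 / 2 + t ^ 4 / 24 - cos t)
    (fun t => by
      have h1 : HasDerivAt (fun t : ℝ => t - t ^ 3 / 6 + t ^ 5 / 120)
          (1 - t ^ 2 / 2 + t ^ 4 / 24) t := by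
        have := (((hasDerivAt_id t).sub ((hasDerivAt_pow 3 t).div_const 6)).add
          ((hasDerivAt_pow 5 t).div_const 120))
        refine this.congr_deriv ?_; push_cast; ring
      exact h1.sub (Real.hasDerivAt_sin t))
    (by norm_num)
    (fun t ht => by have := cos_le_quartic t ht; linarith)
  intro x hx; have := this x hx; simpa using this

private lemma cos_ge_sextic : ∀ x : ℝ, 0 ≤ x →
    1 - x ^ 2 / 2 + x ^ 4 / 24 - x ^ 6 / 720 ≤ cos x := by
  have := nonneg_of_deriv (fun t => cos t - (1 - t ^ 2 / 2 + t ^ 4 / 24 - t ^ 6 / 720))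
    (fun t => (t - t ^ 3 / 6 + t ^ 5 / 120) - sin t)
    (fun t => by
      have h1 : HasDerivAt (fun t : ℝ => 1 - t ^ 2 / 2 + t ^ 4 / 24 - t ^ 6 / 720)
          (-(t - t ^ 3 / 6 + t ^ 5 / 120)) t := by
        have := ((((hasDerivAt_const t (1:ℝ)).sub ((hasDerivAt_pow 2 t).div_const 2)).add
          ((hasDerivAt_pow 4 t).div_const 24)).sub ((hasDerivAt_pow 6 t).div_const 720))
        refine this.congr_deriv ?_; push_cast; ring
      have := (Real.hasDerivAt_cos t).sub h1
      refine this.congr_deriv ?_; ring)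
    (by norm_num)
    (fun t ht => by have := sin_le_quintic t ht; linarith)
  intro x hx; have := this x hx; linarith [this]

private lemma sin_ge_septic : ∀ x : ℝ, 0 ≤ x →
    x - x ^ 3 / 6 + x ^ 5 / 120 - x ^ 7 / 5040 ≤ sin x := by
  have := nonneg_of_deriv
    (fun t => sin t - (t - t ^ 3 / 6 + t ^ 5 / 120 - t ^ 7 / 5040))
    (fun t => cos t - (1 - t ^ 2 / 2 + t ^ 4 / 24 - t ^ 6 / 720))
    (fun t => by
      have h1 : HasDerivAt (fun t : ℝ => t - t ^ 3 / 6 + t ^ 5 / 120 - t ^ 7 / 5040)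
          (1 - t ^ 2 / 2 + t ^ 4 / 24 - t ^ 6 / 720) t := by
        have := ((((hasDerivAt_id t).sub ((hasDerivAt_pow 3 t).div_const 6)).add
          ((hasDerivAt_pow 5 t).div_const 120)).sub ((hasDerivAt_pow 7 t).div_const 5040))
        refine this.congr_deriv ?_; push_cast; ring
      exact (Real.hasDerivAt_sin t).sub h1)
    (by norm_num)
    (fun t ht => by have := cos_ge_sextic t ht; linarith)
  intro x hx; have := this x hx; linarith [this]

private lemma arcsin_third_lt : arcsin (1/3) ≤ 0.33984 := by
  have h1 : (1:ℝ)/3 ≤ sin 0.33984 := by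
    have := sin_ge_septic 0.33984 (by norm_num)
    nlinarith [this]
  have h2 : (0.33984 : ℝ) ≤ π / 2 := by
    have := Real.pi_gt_three
    linarith
  calc arcsin (1/3) ≤ arcsin (sin 0.33984) := by
        apply Real.monotone_arcsin h1
      _ = 0.33984 := Real.arcsin_sin (by norm_num; linarith [Real.pi_gt_three]) h2

private lemma arcsin_third_pos : 0 < arcsin (1/3) := Real.arcsin_pos.2 (by norm_num)

/-- Zipper of length one: for `0 < x ≤ 1/3` the density `π·x/(4·arcsin x)` is
minimized at `x = 1/3`, and this minimum is at least `0.77036`. -/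
theorem zipper_length_one_density :
    (∀ x : ℝ, 0 < x → x ≤ 1/3 →
      π * x / (4 * arcsin x) ≥ π / (12 * arcsin (1/3))) ∧
    π / (12 * arcsin (1/3)) ≥ 0.77036 := by
  constructor
  · intro x hx hx3
    set T := arcsin (1/3) with hT
    have hTpos := arcsin_third_pos
    have hu : 0 < arcsin x := Real.arcsin_pos.2 hx
    have huT : arcsin x ≤ T := Real.monotone_arcsin hx3
    have hT2 : T ≤ π / 2 := Real.arcsin_le_pi_div_two _
    -- concavity of sin on [0, π]
    set u := arcsin x with hu'
    have hlam : u / T ≤ 1 := by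
      rw [div_le_one hTpos]; exact huT
    have hlam0 : 0 ≤ u / T := le_of_lt (div_pos hu hTpos)
    have hconc := strictConcaveOn_sin_Icc.concaveOn.2
      (Set.mem_Icc.2 ⟨le_refl (0:ℝ), Real.pi_pos.le⟩)
      (Set.mem_Icc.2 ⟨hTpos.le, by linarith [Real.pi_pos]⟩)
      (show (0:ℝ) ≤ 1 - u / T by linarith) (show (0:ℝ) ≤ u / T from hlam0)
      (show (1 - u / T) + u / T = 1 by ring)
    have hsin : sin ((1 - u/T) • (0:ℝ) + (u/T) • T) = x := by
      have : (1 - u/T) • (0:ℝ) + (u/T) • T = u := by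
        simp only [smul_zero, zero_add, smul_eq_mul]
        rw [mul_zero, zero_add]; exact div_mul_cancel₀ _ hTpos.ne'
      rw [this, hu', Real.sin_arcsin (by linarith) (by linarith)]
    have hsinT : sin T = 1/3 := Real.sin_arcsin (by norm_num) (by norm_num)
    rw [hsin, Real.sin_zero, hsinT] at hconc
    -- hconc : (1 - u/T) * 0 + (u/T) * (1/3) ≤ x
    have key : u ≤ 3 * x * T := by
      have : u / T * (1/3) ≤ x := by simpa using hconc
      have := (div_le_iff₀ hTpos).1 (by linarith : u / T ≤ 3 * x)
      linarith
    have hπ := Real.pi_pos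
    rw [ge_iff_le, div_le_div_iff₀ (by positivity) (by positivity)]
    nlinarith [mul_pos hπ hu, mul_pos hπ hTpos]
  · have hTpos := arcsin_third_pos
    have hle := arcsin_third_lt
    have hπ := Real.pi_gt_d6
    rw [ge_iff_le, le_div_iff₀ (by positivity)]
    nlinarith
end

section
/- For every λ with 1/8 ≤ λ ≤ 1/4, the quantity V_AD(λ) = arcsin(λ/(1/2 + λ)) · (7/4 − (1/2 + 2λ)²) − (3/4)·arcsin(1/3) satisfies V_AD(λ) ≤ 0.01756. In particular V_AD(1/4) = 0. -/
open Real

/-- Polynomial upper bound for `arcsin` on `[0, 1/3]`. -/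
lemma arcsin_poly_ub {x : ℝ} (h0 : 0 ≤ x) (h1 : x ≤ 1/3) :
    arcsin x ≤ x + x^3/6 + 3*x^5/40 + 5*x^7/112 + 35*x^9/1024 := by
  set f : ℝ → ℝ := fun y => y + y^3/6 + 3*y^5/40 + 5*y^7/112 + 35*y^9/1024 - arcsin y with hf
  have hder : ∀ y ∈ Set.Ioo (0:ℝ) (1/3),
      HasDerivAt f (1 + y^2/2 + 3*y^4/8 + 5*y^6/16 + 315*y^8/1024 - 1/Real.sqrt (1-y^2)) y := by
    intro y hy
    obtain ⟨hy0, hy3⟩ := hy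
    have hne1 : y ≠ 1 := by intro h; rw [h] at hy3; norm_num at hy3
    have hnem1 : y ≠ -1 := by intro h; rw [h] at hy0; norm_num at hy0
    have ha := Real.hasDerivAt_arcsin hnem1 hne1
    have hp : HasDerivAt (fun y : ℝ => y + y^3/6 + 3*y^5/40 + 5*y^7/112 + 35*y^9/1024)
        (1 + y^2/2 + 3*y^4/8 + 5*y^6/16 + 315*y^8/1024) y := by
      have h1 := hasDerivAt_id y
      have h3 := (hasDerivAt_pow 3 y).div_const 6
      have h5 := ((hasDerivAt_pow 5 y).const_mul (3:ℝ)).div_const 40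
      have h7 := ((hasDerivAt_pow 7 y).const_mul (5:ℝ)).div_const 112
      have h9 := ((hasDerivAt_pow 9 y).const_mul (35:ℝ)).div_const 1024
      have := (((h1.add h3).add h5).add h7).add h9
      refine this.congr_deriv ?_
      push_cast
      ring
    exact hp.sub ha
  have hmono : MonotoneOn f (Set.Icc (0:ℝ) (1/3)) := by
    apply monotoneOn_of_deriv_nonneg (convex_Icc _ _)
    · exact ((by fun_prop : Continuous fun y : ℝ =>
        y + y^3/6 + 3*y^5/40 + 5*y^7/112 + 35*y^9/1024).sub continuous_arcsin).continuousOn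
    · intro y hy
      rw [interior_Icc] at hy
      exact (hder y hy).differentiableAt.differentiableWithinAt
    · intro y hy
      rw [interior_Icc] at hy
      rw [(hder y hy).deriv]
      obtain ⟨hy0, hy3⟩ := hy
      have hsq : (0:ℝ) < 1 - y^2 := by nlinarith
      set s := Real.sqrt (1 - y^2) with hs
      have hs0 : 0 < s := Real.sqrt_pos.2 hsq
      have hs2 : s^2 = 1 - y^2 := Real.sq_sqrt hsq.le
      have hP : (0:ℝ) ≤ 1 + y^2/2 + 3*y^4/8 + 5*y^6/16 + 315*y^8/1024 := by positivity
      have hq : 1 ≤ ((1 + y^2/2 + 3*y^4/8 + 5*y^6/16 + 315*y^8/1024) * s)^2 := by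
        rw [mul_pow, hs2]
        have hu : y^2 ≤ 1/9 := by nlinarith
        nlinarith [mul_nonneg (pow_nonneg hy0.le 8) (by linarith : (0:ℝ) ≤ 1/9 - y^2),
          mul_nonneg (pow_nonneg hy0.le 10) (by linarith : (0:ℝ) ≤ 1/9 - y^2),
          mul_nonneg (pow_nonneg hy0.le 12) (by linarith : (0:ℝ) ≤ 1/9 - y^2),
          mul_nonneg (pow_nonneg hy0.le 14) (by linarith : (0:ℝ) ≤ 1/9 - y^2),
          mul_nonneg (pow_nonneg hy0.le 16) (by linarith : (0:ℝ) ≤ 1/9 - y^2)]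
      have hps : 1 ≤ (1 + y^2/2 + 3*y^4/8 + 5*y^6/16 + 315*y^8/1024) * s := by
        nlinarith [mul_nonneg hP hs0.le]
      have : 1/s ≤ 1 + y^2/2 + 3*y^4/8 + 5*y^6/16 + 315*y^8/1024 := by
        rw [div_le_iff₀ hs0]
        linarith
      linarith
  have h03 : (0:ℝ) ∈ Set.Icc (0:ℝ) (1/3) := by constructor <;> norm_num
  have hx3 : x ∈ Set.Icc (0:ℝ) (1/3) := ⟨h0, h1⟩
  have := hmono h03 hx3 h0
  simp only [hf, Real.arcsin_zero] at this
  norm_num at this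
  linarith

/-- Polynomial lower bound for `arcsin` on `[0, 1/3]`. -/
lemma arcsin_poly_lb {x : ℝ} (h0 : 0 ≤ x) (h1 : x ≤ 1/3) :
    x + x^3/6 + 3*x^5/40 + 5*x^7/112 + 35*x^9/1152 + 63*x^11/2816 + 231*x^13/13312
      ≤ arcsin x := by
  set f : ℝ → ℝ := fun y => arcsin y -
    (y + y^3/6 + 3*y^5/40 + 5*y^7/112 + 35*y^9/1152 + 63*y^11/2816 + 231*y^13/13312) with hf
  have hder : ∀ y ∈ Set.Ioo (0:ℝ) (1/3),
      HasDerivAt f (1/Real.sqrt (1-y^2) -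
        (1 + y^2/2 + 3*y^4/8 + 5*y^6/16 + 35*y^8/128 + 63*y^10/256 + 231*y^12/1024)) y := by
    intro y hy
    obtain ⟨hy0, hy3⟩ := hy
    have hne1 : y ≠ 1 := by intro h; rw [h] at hy3; norm_num at hy3
    have hnem1 : y ≠ -1 := by intro h; rw [h] at hy0; norm_num at hy0
    have ha := Real.hasDerivAt_arcsin hnem1 hne1
    have hp : HasDerivAt (fun y : ℝ =>
        y + y^3/6 + 3*y^5/40 + 5*y^7/112 + 35*y^9/1152 + 63*y^11/2816 + 231*y^13/13312)
        (1 + y^2/2 + 3*y^4/8 + 5*y^6/16 + 35*y^8/128 + 63*y^10/256 + 231*y^12/1024) y := by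
      have h1 := hasDerivAt_id y
      have h3 := (hasDerivAt_pow 3 y).div_const 6
      have h5 := ((hasDerivAt_pow 5 y).const_mul (3:ℝ)).div_const 40
      have h7 := ((hasDerivAt_pow 7 y).const_mul (5:ℝ)).div_const 112
      have h9 := ((hasDerivAt_pow 9 y).const_mul (35:ℝ)).div_const 1152
      have h11 := ((hasDerivAt_pow 11 y).const_mul (63:ℝ)).div_const 2816
      have h13 := ((hasDerivAt_pow 13 y).const_mul (231:ℝ)).div_const 13312
      have := (((((h1.add h3).add h5).add h7).add h9).add h11).add h13
      refine this.congr_deriv ?_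
      push_cast
      ring
    exact ha.sub hp
  have hmono : MonotoneOn f (Set.Icc (0:ℝ) (1/3)) := by
    apply monotoneOn_of_deriv_nonneg (convex_Icc _ _)
    · exact (continuous_arcsin.sub (by fun_prop : Continuous fun y : ℝ =>
        y + y^3/6 + 3*y^5/40 + 5*y^7/112 + 35*y^9/1152 + 63*y^11/2816 + 231*y^13/13312)).continuousOn
    · intro y hy
      rw [interior_Icc] at hy
      exact (hder y hy).differentiableAt.differentiableWithinAt
    · intro y hy
      rw [interior_Icc] at hy
      rw [(hder y hy).deriv]
      obtain ⟨hy0, hy3⟩ := hy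
      have hsq : (0:ℝ) < 1 - y^2 := by nlinarith
      set s := Real.sqrt (1 - y^2) with hs
      have hs0 : 0 < s := Real.sqrt_pos.2 hsq
      have hs2 : s^2 = 1 - y^2 := Real.sq_sqrt hsq.le
      have hP : (0:ℝ) ≤ 1 + y^2/2 + 3*y^4/8 + 5*y^6/16 + 35*y^8/128 + 63*y^10/256 + 231*y^12/1024 := by
        positivity
      have hq : ((1 + y^2/2 + 3*y^4/8 + 5*y^6/16 + 35*y^8/128 + 63*y^10/256 + 231*y^12/1024) * s)^2
          ≤ 1 := by
        rw [mul_pow, hs2]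
        nlinarith [pow_nonneg hy0.le 14, pow_nonneg hy0.le 16, pow_nonneg hy0.le 18,
          pow_nonneg hy0.le 20, pow_nonneg hy0.le 22, pow_nonneg hy0.le 24, pow_nonneg hy0.le 26]
      have hps : (1 + y^2/2 + 3*y^4/8 + 5*y^6/16 + 35*y^8/128 + 63*y^10/256 + 231*y^12/1024) * s
          ≤ 1 := by
        nlinarith [mul_nonneg hP hs0.le]
      have : 1 + y^2/2 + 3*y^4/8 + 5*y^6/16 + 35*y^8/128 + 63*y^10/256 + 231*y^12/1024 ≤ 1/s := by
        rw [le_div_iff₀ hs0]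
        linarith
      linarith
  have h03 : (0:ℝ) ∈ Set.Icc (0:ℝ) (1/3) := by constructor <;> norm_num
  have hx3 : x ∈ Set.Icc (0:ℝ) (1/3) := ⟨h0, h1⟩
  have := hmono h03 hx3 h0
  simp only [hf, Real.arcsin_zero] at this
  norm_num at this
  linarith

/-- Rational lower bound for `arcsin (1/3)`. -/
lemma arcsin_third_lb : (925613412833/2723698897920 : ℝ) ≤ arcsin (1/3) := by
  have := arcsin_poly_lb (by norm_num : (0:ℝ) ≤ 1/3) (le_refl _)
  calc (925613412833/2723698897920 : ℝ)
      = 1/3 + (1/3:ℝ)^3/6 + 3*(1/3:ℝ)^5/40 + 5*(1/3:ℝ)^7/112 + 35*(1/3:ℝ)^9/1152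
        + 63*(1/3:ℝ)^11/2816 + 231*(1/3:ℝ)^13/13312 := by norm_num
    _ ≤ arcsin (1/3) := this

set_option maxHeartbeats 4000000 in
/-- Gap bound: for `1/8 ≤ λ ≤ 1/4`, the quantity
`V_AD(λ) = arcsin(λ/(1/2+λ))·(7/4 − (1/2+2λ)²) − (3/4)·arcsin(1/3)` is at most
`0.01756`; moreover `V_AD(1/4) = 0`. -/
theorem VAD_bound :
    (∀ l : ℝ, 1/8 ≤ l → l ≤ 1/4 →
      arcsin (l / (1/2 + l)) * (7/4 - (1/2 + 2*l)^2) - 3/4 * arcsin (1/3)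
        ≤ 0.01756) ∧
    arcsin ((1/4) / (1/2 + 1/4)) * (7/4 - (1/2 + 2*(1/4))^2)
      - 3/4 * arcsin (1/3) = 0 := by
  constructor
  · intro l hl1 hl2
    have hl2pos : (0:ℝ) < 1/2 + l := by linarith
    set x : ℝ := l / (1/2 + l) with hxdef
    have hx0 : 0 ≤ x := div_nonneg (by linarith) hl2pos.le
    have hx3 : x ≤ 1/3 := by
      rw [hxdef, div_le_iff₀ hl2pos]
      linarith
    have hx5 : 1/5 ≤ x := by
      rw [hxdef, le_div_iff₀ hl2pos]
      linarith
    have hg : 7/4 - (1/2 + 2*l)^2 = (6 - 16*x + 6*x^2) / (4*(1-x)^2) := by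
      rw [hxdef]
      have hne : (1/2 + l : ℝ) ≠ 0 := ne_of_gt hl2pos
      have h1x : (1:ℝ) - l / (1/2 + l) = (1/2) / (1/2 + l) := by
        field_simp
        ring
      rw [h1x]
      field_simp
      ring
    have hgpos : (0:ℝ) ≤ 7/4 - (1/2 + 2*l)^2 := by nlinarith
    have hub := arcsin_poly_ub hx0 hx3
    have h5 : arcsin x * (7/4 - (1/2 + 2*l)^2)
        ≤ (x + x^3/6 + 3*x^5/40 + 5*x^7/112 + 35*x^9/1024) * (7/4 - (1/2 + 2*l)^2) :=
      mul_le_mul_of_nonneg_right hub hgpos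
    have hPg : (x + x^3/6 + 3*x^5/40 + 5*x^7/112 + 35*x^9/1024) * (7/4 - (1/2 + 2*l)^2)
        ≤ (618365176893521/2269749081600000 : ℝ) := by
      rw [hg, ← mul_div_assoc]
      have hden : (0:ℝ) < 4*(1-x)^2 := by nlinarith
      rw [div_le_iff₀ hden]
      -- Taylor certificate around a = 282267/1000000
      have hT : (11:ℝ) ≤
          24835603668578289998788998121617196713291436953141488635328444011/1815799265280000000000000000000000000000000000000000000000000000
          - 588742743790445740973494789439157970683517610232349/102400000000000000000000000000000000000000000000000 * x
          + 80241910326977318591874660610879856856140851/38400000000000000000000000000000000000000000 * x^2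
          - 91110004890563318875052760884468721643/102400000000000000000000000000000000000 * x^3
          + 48029973993424221175472303465259/51200000000000000000000000000000 * x^4
          - 7884284565902921211295941/20480000000000000000000000 * x^5
          + 14324876122013908577/25600000000000000000 * x^6
          - 152839196746449/716800000000000 * x^7
          + 22072393/51200000 * x^8
          - 105/512 * x^9 := by
        have p3 : x^3 ≤ 1/27 := by nlinarith
        have p5 : x^5 ≤ 1/243 := by nlinarith [pow_nonneg hx0 2, pow_nonneg hx0 3]
        have p7 : x^7 ≤ 1/2187 := by nlinarith [pow_nonneg hx0 5, pow_nonneg hx0 4, p5]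
        have p9 : x^9 ≤ 1/19683 := by nlinarith [pow_nonneg hx0 7, pow_nonneg hx0 6, p7]
        have q2 : (0:ℝ) ≤ x^2 := pow_nonneg hx0 2
        have q4 : (0:ℝ) ≤ x^4 := pow_nonneg hx0 4
        have q6 : (0:ℝ) ≤ x^6 := pow_nonneg hx0 6
        have q8 : (0:ℝ) ≤ x^8 := pow_nonneg hx0 8
        linarith
      have hkey : (618365176893521/2269749081600000 : ℝ) * (4*(1-x)^2)
          - (x + x^3/6 + 3*x^5/40 + 5*x^7/112 + 35*x^9/1024) * (6 - 16*x + 6*x^2)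
          = 2757570314763981131293766835825863900225233146094543679224706154368179/18157992652800000000000000000000000000000000000000000000000000000000000000000
          + (-1054732646498745415605855636103363982345577521471357712107417693/18157992652800000000000000000000000000000000000000000000000000000000000)
            * (x - 282267/1000000)
          + (x - 282267/1000000)^2 *
            (24835603668578289998788998121617196713291436953141488635328444011/1815799265280000000000000000000000000000000000000000000000000000
            - 588742743790445740973494789439157970683517610232349/102400000000000000000000000000000000000000000000000 * x
            + 80241910326977318591874660610879856856140851/38400000000000000000000000000000000000000000 * x^2
            - 91110004890563318875052760884468721643/102400000000000000000000000000000000000 * x^3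
            + 48029973993424221175472303465259/51200000000000000000000000000000 * x^4
            - 7884284565902921211295941/20480000000000000000000000 * x^5
            + 14324876122013908577/25600000000000000000 * x^6
            - 152839196746449/716800000000000 * x^7
            + 22072393/51200000 * x^8
            - 105/512 * x^9) := by
        ring
      nlinarith [hkey, hT, sq_nonneg (x - 282267/1000000),
        mul_nonneg (sq_nonneg (x - 282267/1000000)) (by linarith : (0:ℝ) ≤
          24835603668578289998788998121617196713291436953141488635328444011/1815799265280000000000000000000000000000000000000000000000000000
          - 588742743790445740973494789439157970683517610232349/102400000000000000000000000000000000000000000000000 * x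
          + 80241910326977318591874660610879856856140851/38400000000000000000000000000000000000000000 * x^2
          - 91110004890563318875052760884468721643/102400000000000000000000000000000000000 * x^3
          + 48029973993424221175472303465259/51200000000000000000000000000000 * x^4
          - 7884284565902921211295941/20480000000000000000000000 * x^5
          + 14324876122013908577/25600000000000000000 * x^6
          - 152839196746449/716800000000000 * x^7
          + 22072393/51200000 * x^8
          - 105/512 * x^9 - 11),
        sq_nonneg (22*(x - 282267/1000000)
          - 1054732646498745415605855636103363982345577521471357712107417693/18157992652800000000000000000000000000000000000000000000000000000000000/22)]
    have hA := arcsin_third_lb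
    have : (618365176893521/2269749081600000 : ℝ)
        ≤ 0.01756 + 3/4 * arcsin (1/3) := by
      have : (618365176893521/2269749081600000 : ℝ)
          = 0.01756 + 3/4 * (925613412833/2723698897920 : ℝ) := by norm_num
      rw [this]
      linarith
    linarith
  · have h13 : ((1/4 : ℝ)) / (1/2 + 1/4) = 1/3 := by norm_num
    rw [h13]
    norm_num
    ring
end

section
/- For every x with 1/4 ≤ x ≤ 0.5625, the inequality f₁(x) ≥ f₂(x) holds, where f₁(x) = (1/2)·(0.4365·π − arccos(√x))·(1 − x) and f₂(x) = 0.19705·arcsin((1 − √x)/(1 + √x))·(1 − x) + (arcsin(1/3)/2)·x. -/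
set_option maxHeartbeats 1000000
open Real

private lemma arcsin_ge_of (y q : ℝ) (hq0 : 0 ≤ q) (hq1 : q ≤ 1)
    (h : q - q ^ 3 / 6 + q ^ 4 * (5 / 96) ≤ y) : q ≤ arcsin y := by
  have hpi : (3.141592 : ℝ) < π := by
    have := Real.pi_gt_d6; linarith
  have habs : |q| ≤ 1 := by rw [abs_of_nonneg hq0]; exact hq1
  have hb := Real.sin_bound habs
  rw [abs_of_nonneg hq0] at hb
  have hsin : Real.sin q ≤ y := by
    have := abs_le.1 hb
    nlinarith [this.1, this.2, mul_nonneg (pow_nonneg hq0 4) (show (0:ℝ) ≤ 5/96 - q/100 by linarith)]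
  calc q = arcsin (Real.sin q) := (Real.arcsin_sin (by linarith) (by linarith)).symm
    _ ≤ arcsin y := Real.monotone_arcsin hsin

private lemma arcsin_le_of (y q : ℝ) (hq0 : 0 ≤ q) (hq1 : q ≤ 1)
    (h : y ≤ q - q ^ 3 / 6 - q ^ 4 * (5 / 96)) : arcsin y ≤ q := by
  have hpi : (3.141592 : ℝ) < π := by
    have := Real.pi_gt_d6; linarith
  have habs : |q| ≤ 1 := by rw [abs_of_nonneg hq0]; exact hq1
  have hb := Real.sin_bound habs
  rw [abs_of_nonneg hq0] at hb
  have hsin : y ≤ Real.sin q := by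
    have := abs_le.1 hb
    nlinarith [this.1, this.2, mul_nonneg (pow_nonneg hq0 4) (show (0:ℝ) ≤ 5/96 - q/100 by linarith)]
  calc arcsin y ≤ arcsin (Real.sin q) := Real.monotone_arcsin hsin
    _ = q := Real.arcsin_sin (by linarith) (by linarith)

private lemma key (x s0 s1 A T : ℝ)
    (hx1 : s0 ^ 2 ≤ x) (hx2 : x ≤ s1 ^ 2)
    (hs0 : 0 ≤ s0) (hs01 : s0 ≤ s1) (hs1 : s1 ≤ 1)
    (hA : A ≤ arcsin s0)
    (hT : arcsin ((1 - s0) / (1 + s0)) ≤ T)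
    (hApos : 0.0635 * 3.141593 ≤ A)
    (hnum : 0.19705 * T * (1 - s0 ^ 2) + 0.3407 / 2 * s1 ^ 2 ≤
      1 / 2 * (A - 0.0635 * 3.141593) * (1 - s1 ^ 2)) :
    1/2 * (0.4365 * π - arccos (Real.sqrt x)) * (1 - x) ≥
      0.19705 * arcsin ((1 - Real.sqrt x) / (1 + Real.sqrt x)) * (1 - x)
        + arcsin (1/3) / 2 * x := by
  have hpiu : π < 3.141593 := by
    have := Real.pi_lt_d6; linarith
  have hpil : (3.141592 : ℝ) < π := by
    have := Real.pi_gt_d6; linarith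
  set s : ℝ := Real.sqrt x with hs
  have hs_nn : 0 ≤ s := Real.sqrt_nonneg x
  have hs_lb : s0 ≤ s := (Real.le_sqrt hs0 (by nlinarith)).2 hx1
  have hs_ub : s ≤ s1 := by
    have := Real.sqrt_le_sqrt hx2
    rwa [Real.sqrt_sq (by linarith)] at this
  have hs_le1 : s ≤ 1 := hs_ub.trans hs1
  have ha : A ≤ arcsin s := hA.trans (Real.monotone_arcsin hs_lb)
  have hden : (0:ℝ) < 1 + s := by linarith
  have hden0 : (0:ℝ) < 1 + s0 := by linarith
  have ht_mono : (1 - s) / (1 + s) ≤ (1 - s0) / (1 + s0) := by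
    rw [div_le_div_iff₀ hden hden0]; nlinarith
  have ht0 : (0:ℝ) ≤ (1 - s) / (1 + s) := div_nonneg (by linarith) (by linarith)
  have harcT : arcsin ((1 - s) / (1 + s)) ≤ T :=
    (Real.monotone_arcsin ht_mono).trans hT
  have harcT0 : 0 ≤ arcsin ((1 - s) / (1 + s)) := Real.arcsin_nonneg.2 ht0
  have hC : arcsin (1/3 : ℝ) ≤ 0.3407 := by
    apply arcsin_le_of <;> norm_num
  have hC0 : (0:ℝ) ≤ arcsin (1/3 : ℝ) := Real.arcsin_nonneg.2 (by norm_num)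
  have hxnn : (0:ℝ) ≤ x := by nlinarith
  have hu1 : 1 - s1 ^ 2 ≤ 1 - x := by linarith
  have hu2 : 1 - x ≤ 1 - s0 ^ 2 := by linarith
  have hu0 : (0:ℝ) ≤ 1 - s1 ^ 2 := by nlinarith
  -- bound the three products
  have h2 : (A - 0.0635 * 3.141593) * (1 - s1 ^ 2) ≤ (arcsin s - 0.0635 * π) * (1 - x) := by
    apply mul_le_mul (by nlinarith) hu1 hu0 (by nlinarith)
  have h3 : arcsin ((1 - s) / (1 + s)) * (1 - x) ≤ T * (1 - s0 ^ 2) :=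
    mul_le_mul harcT hu2 (by linarith) (le_trans harcT0 harcT)
  have h4 : arcsin (1/3 : ℝ) * x ≤ 0.3407 * s1 ^ 2 :=
    mul_le_mul hC hx2 hxnn (by norm_num)
  rw [Real.arccos_eq_pi_div_two_sub_arcsin]
  have hring : 1/2 * (0.4365 * π - (π / 2 - arcsin s)) * (1 - x)
      = 1/2 * ((arcsin s - 0.0635 * π) * (1 - x)) := by ring
  rw [ge_iff_le, hring]
  nlinarith [h2, h3, h4, hnum]

/-- Analytic core of the technical lemma for the largest maximal ring:
for `1/4 ≤ x ≤ 0.5625`,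
`(1/2)·(0.4365·π − arccos √x)·(1 − x)
  ≥ 0.19705·arcsin((1 − √x)/(1 + √x))·(1 − x) + (arcsin(1/3)/2)·x`. -/
theorem f1_ge_f2 (x : ℝ) (h₁ : 1/4 ≤ x) (h₂ : x ≤ 0.5625) :
    1/2 * (0.4365 * π - arccos (Real.sqrt x)) * (1 - x) ≥
      0.19705 * arcsin ((1 - Real.sqrt x) / (1 + Real.sqrt x)) * (1 - x)
        + arcsin (1/3) / 2 * x := by
  rcases le_total x 0.3025 with h | h
  · exact key x 0.5 0.55 0.5195 0.3407 (by norm_num; linarith) (by norm_num; linarith)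
      (by norm_num) (by norm_num) (by norm_num)
      (arcsin_ge_of _ _ (by norm_num) (by norm_num) (by norm_num))
      (arcsin_le_of _ _ (by norm_num) (by norm_num) (by norm_num))
      (by norm_num) (by norm_num)
  rcases le_total x 0.36 with h' | h'
  · exact key x 0.55 0.6 0.5761 0.295 (by norm_num; linarith) (by norm_num; linarith)
      (by norm_num) (by norm_num) (by norm_num)
      (arcsin_ge_of _ _ (by norm_num) (by norm_num) (by norm_num))
      (arcsin_le_of _ _ (by norm_num) (by norm_num) (by norm_num))
      (by norm_num) (by norm_num)
  rcases le_total x 0.4225 with h'' | h''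
  · exact key x 0.6 0.65 0.634 0.253 (by norm_num; linarith) (by norm_num; linarith)
      (by norm_num) (by norm_num) (by norm_num)
      (arcsin_ge_of _ _ (by norm_num) (by norm_num) (by norm_num))
      (arcsin_le_of _ _ (by norm_num) (by norm_num) (by norm_num))
      (by norm_num) (by norm_num)
  rcases le_total x 0.49 with h''' | h'''
  · exact key x 0.65 0.7 0.6935 0.2139 (by norm_num; linarith) (by norm_num; linarith)
      (by norm_num) (by norm_num) (by norm_num)
      (arcsin_ge_of _ _ (by norm_num) (by norm_num) (by norm_num))
      (arcsin_le_of _ _ (by norm_num) (by norm_num) (by norm_num))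
      (by norm_num) (by norm_num)
  · exact key x 0.7 0.75 0.7547 0.1775 (by norm_num; linarith) (by norm_num; linarith)
      (by norm_num) (by norm_num) (by norm_num)
      (arcsin_ge_of _ _ (by norm_num) (by norm_num) (by norm_num))
      (arcsin_le_of _ _ (by norm_num) (by norm_num) (by norm_num))
      (by norm_num) (by norm_num)
end
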